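/- arXiv:1402.3003 — 2 statements merged into one kernel-verified Lean document; each statement's English description precedes it below -/
import Mathlib

section
/- Let N ≥ 2 and R > 0. Then there exists a constant κ > 0, depending only on N and R, such that for every f ∈ L¹(ℝ^N) with support contained in the closed ball of radius R centered at 0, and every x ∈ ℝ^N with |x| ≥ 2R: | ∫_{B_R} ( e^{i|x-y|}·|x-y|^{-(N-1)/2} − e^{i(|x| - x̂·y)}·|x|^{-(N-1)/2} ) f(y) dy | ≤ κ·‖f‖_{L¹(ℝ^N)}·|x|^{-(N+1)/2}. -/
open MeasureTheory Filter Metric Complex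
open scoped Real RealInnerProductSpace ENNReal Topology

-- Lipschitz bound for t ↦ exp(I t)
lemma exp_I_lipschitz (a b : ℝ) :
    ‖Complex.exp (Complex.I * a) - Complex.exp (Complex.I * b)‖ ≤ |a - b| := by
  have hd : ∀ t : ℝ, HasDerivAt (fun s : ℝ => Complex.exp (Complex.I * s))
      (Complex.exp (Complex.I * t) * Complex.I) t := by
    intro t
    have h1 : HasDerivAt (fun z : ℂ => Complex.exp (Complex.I * z))
        (Complex.exp (Complex.I * (t:ℂ)) * Complex.I) (t:ℂ) := by
      simpa using (((hasDerivAt_id ((t:ℝ):ℂ)).const_mul Complex.I).cexp)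
    exact h1.comp_ofReal
  have := Convex.norm_image_sub_le_of_norm_hasDerivWithin_le
    (f := fun s : ℝ => Complex.exp (Complex.I * s))
    (f' := fun t : ℝ => Complex.exp (Complex.I * t) * Complex.I)
    (s := Set.univ) (C := 1)
    (fun t _ => (hd t).hasDerivWithinAt)
    (fun t _ => by
      rw [norm_mul, Complex.norm_exp]
      simp [mul_comm]) convex_univ (Set.mem_univ b) (Set.mem_univ a)
  simpa [Real.norm_eq_abs, abs_sub_comm] using this

-- Lipschitz bound for t ↦ t ^ (-α) on [m, ∞)
lemma rpow_neg_lipschitz {m α : ℝ} (hm : 0 < m) (hα : 0 ≤ α) {a b : ℝ}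
    (ha : m ≤ a) (hb : m ≤ b) :
    |a ^ (-α) - b ^ (-α)| ≤ α * m ^ (-α - 1) * |a - b| := by
  have := Convex.norm_image_sub_le_of_norm_hasDerivWithin_le
    (f := fun t : ℝ => t ^ (-α))
    (f' := fun t : ℝ => (-α) * t ^ (-α - 1))
    (s := Set.Ici m) (C := α * m ^ (-α - 1))
    (fun t ht => (Real.hasDerivAt_rpow_const
      (Or.inl (ne_of_gt (lt_of_lt_of_le hm ht)))).hasDerivWithinAt)
    (fun t ht => by
      have ht0 : 0 < t := lt_of_lt_of_le hm ht
      rw [Real.norm_eq_abs, abs_mul, abs_neg, _root_.abs_of_nonneg hα,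
        _root_.abs_of_nonneg (Real.rpow_nonneg ht0.le _)]
      have h2 : t ^ (-α - 1) ≤ m ^ (-α - 1) :=
        Real.rpow_le_rpow_of_nonpos hm ht (by linarith)
      have h3 : 0 ≤ m ^ (-α - 1) := Real.rpow_nonneg hm.le _
      nlinarith [Real.rpow_nonneg ht0.le (-α - 1)])
    (convex_Ici m) hb ha
  simpa [Real.norm_eq_abs] using this

lemma pointwise_kernel_bound {N : ℕ} (hN : 2 ≤ N) {R : ℝ} (hR : 0 < R)
    (x y : EuclideanSpace ℝ (Fin N)) (hx : 2 * R ≤ ‖x‖) (hy : ‖y‖ ≤ R) :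
    ‖(Complex.exp (Complex.I * (‖x - y‖ : ℝ)) *
          ((‖x - y‖ ^ (-(((N : ℝ) - 1) / 2)) : ℝ) : ℂ) -
        Complex.exp (Complex.I * ((‖x‖ - ⟪‖x‖⁻¹ • x, y⟫ : ℝ) : ℂ)) *
          ((‖x‖ ^ (-(((N : ℝ) - 1) / 2)) : ℝ) : ℂ))‖
      ≤ ((((N : ℝ) - 1) / 2) * 2 ^ ((((N : ℝ) - 1) / 2) + 1) * R + R ^ 2) *
          ‖x‖ ^ (-(((N : ℝ) + 1) / 2)) := by
  set α : ℝ := ((N : ℝ) - 1) / 2 with hα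
  have hα0 : 0 ≤ α := by
    have : (2 : ℝ) ≤ (N : ℝ) := by exact_mod_cast hN
    simp only [hα]; linarith
  set c : ℝ := ‖x‖ with hcdef
  set a : ℝ := ‖x - y‖ with hadef
  set t : ℝ := ⟪‖x‖⁻¹ • x, y⟫ with htdef
  have hc : 0 < c := lt_of_lt_of_le (by linarith) hx
  have hRc : R ≤ c / 2 := by linarith
  have ha2 : c / 2 ≤ a := by
    have := norm_sub_norm_le x y
    simp only [hadef, hcdef] at *
    linarith
  have ht : |t| ≤ R := by
    have h1 : |⟪x, y⟫| ≤ ‖x‖ * ‖y‖ := abs_real_inner_le_norm x y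
    have : t = c⁻¹ * ⟪x, y⟫ := by rw [htdef, real_inner_smul_left]
    rw [this, abs_mul, abs_of_pos (inv_pos.mpr hc)]
    calc c⁻¹ * |⟪x, y⟫| ≤ c⁻¹ * (c * ‖y‖) := by
          apply mul_le_mul_of_nonneg_left _ (inv_pos.mpr hc).le
          exact h1
      _ = ‖y‖ := by field_simp
      _ ≤ R := hy
  set b : ℝ := c - t with hbdef
  have hb2 : c / 2 ≤ b := by
    have := abs_le.mp ht
    simp only [hbdef]; linarith
  -- Step 1: rpow difference
  have hac : |a - c| ≤ R := by
    have h1 : |‖x - y‖ - ‖x‖| ≤ ‖(x - y) - x‖ := abs_norm_sub_norm_le _ _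
    have h2 : (x - y) - x = -y := by abel
    rw [h2, norm_neg] at h1
    exact le_trans h1 hy
  have hstep1 : |a ^ (-α) - c ^ (-α)| ≤ α * (c / 2) ^ (-α - 1) * R := by
    calc |a ^ (-α) - c ^ (-α)| ≤ α * (c / 2) ^ (-α - 1) * |a - c| :=
          rpow_neg_lipschitz (by linarith) hα0 ha2 (by linarith)
      _ ≤ α * (c / 2) ^ (-α - 1) * R := by
          apply mul_le_mul_of_nonneg_left hac
          positivity
  -- Step 2: phase difference
  have hab : |a - b| ≤ R ^ 2 / c := by
    have hsq : a ^ 2 - b ^ 2 = ‖y‖ ^ 2 - t ^ 2 := by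
      have h1 : a ^ 2 = c ^ 2 - 2 * ⟪x, y⟫ + ‖y‖ ^ 2 := norm_sub_sq_real x y
      have h2 : c * t = ⟪x, y⟫ := by
        rw [htdef, real_inner_smul_left]; rw [← mul_assoc]; rw [show c * ‖x‖⁻¹ = 1 from mul_inv_cancel₀ hc.ne', one_mul]
      rw [h1, hbdef, ← h2]; ring
    have hnum : |a ^ 2 - b ^ 2| ≤ R ^ 2 := by
      rw [hsq]
      have h3 : t ^ 2 ≤ ‖y‖ ^ 2 := by
        have : |t| ≤ ‖y‖ := by
          have h1 : |⟪x, y⟫| ≤ ‖x‖ * ‖y‖ := abs_real_inner_le_norm x y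
          have h4 : t = c⁻¹ * ⟪x, y⟫ := by rw [htdef, real_inner_smul_left]
          rw [h4, abs_mul, abs_of_pos (inv_pos.mpr hc)]
          calc c⁻¹ * |⟪x, y⟫| ≤ c⁻¹ * (c * ‖y‖) :=
                mul_le_mul_of_nonneg_left h1 (inv_pos.mpr hc).le
            _ = ‖y‖ := by field_simp
        nlinarith [abs_nonneg t, _root_.sq_abs t]
      have h5 : ‖y‖ ^ 2 ≤ R ^ 2 := by nlinarith [norm_nonneg y]
      rw [_root_.abs_of_nonneg (by linarith : (0:ℝ) ≤ ‖y‖ ^ 2 - t ^ 2)]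
      nlinarith [sq_nonneg t]
    have hden : c ≤ a + b := by linarith
    have heq : a - b = (a ^ 2 - b ^ 2) / (a + b) := by
      have : a + b ≠ 0 := (by linarith : (0:ℝ) < a + b).ne'
      field_simp; ring
    rw [heq, abs_div, abs_of_pos (by linarith : (0:ℝ) < a + b)]
    exact div_le_div₀ (by positivity) hnum hc hden
  have hstep2 : ‖Complex.exp (Complex.I * (a : ℂ)) -
      Complex.exp (Complex.I * (b : ℂ))‖ ≤ R ^ 2 / c :=
    le_trans (exp_I_lipschitz a b) hab
  -- Assemble
  have habs1 : ‖Complex.exp (Complex.I * (a : ℂ))‖ = 1 := by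
    rw [Complex.norm_exp]; simp
  calc ‖Complex.exp (Complex.I * (a : ℂ)) * ((a ^ (-α) : ℝ) : ℂ) -
        Complex.exp (Complex.I * (b : ℂ)) * ((c ^ (-α) : ℝ) : ℂ)‖
      = ‖Complex.exp (Complex.I * (a : ℂ)) *
          (((a ^ (-α) : ℝ) : ℂ) - ((c ^ (-α) : ℝ) : ℂ)) +
        (Complex.exp (Complex.I * (a : ℂ)) - Complex.exp (Complex.I * (b : ℂ))) *
          ((c ^ (-α) : ℝ) : ℂ)‖ := by ring_nf
    _ ≤ ‖Complex.exp (Complex.I * (a : ℂ)) *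
          (((a ^ (-α) : ℝ) : ℂ) - ((c ^ (-α) : ℝ) : ℂ))‖ +
        ‖(Complex.exp (Complex.I * (a : ℂ)) -
          Complex.exp (Complex.I * (b : ℂ))) * ((c ^ (-α) : ℝ) : ℂ)‖ :=
        norm_add_le _ _
    _ ≤ α * (c / 2) ^ (-α - 1) * R + (R ^ 2 / c) * c ^ (-α) := by
        rw [norm_mul, norm_mul, habs1, one_mul]
        refine add_le_add ?_ ?_
        · rw [← Complex.ofReal_sub, Complex.norm_real, Real.norm_eq_abs]
          exact hstep1
        · rw [Complex.norm_real, Real.norm_eq_abs, _root_.abs_of_nonneg (Real.rpow_nonneg hc.le _)]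
          exact mul_le_mul_of_nonneg_right hstep2 (Real.rpow_nonneg hc.le _)
    _ = (α * 2 ^ (α + 1) * R + R ^ 2) * c ^ (-(((N : ℝ) + 1) / 2)) := by
        have h2e : (2:ℝ) ^ (-α - 1) = ((2:ℝ) ^ (α + 1))⁻¹ := by
          rw [← Real.rpow_neg (by norm_num : (0:ℝ) ≤ 2)]
          ring_nf
        have h1 : (c / 2) ^ (-α - 1) = 2 ^ (α + 1) * c ^ (-α - 1) := by
          rw [Real.div_rpow hc.le (by norm_num : (0:ℝ) ≤ 2), h2e, div_eq_mul_inv,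
            inv_inv]
          ring
        have h2 : (R ^ 2 / c) * c ^ (-α) = R ^ 2 * c ^ (-α - 1) := by
          rw [Real.rpow_sub hc, Real.rpow_one, Real.rpow_neg hc.le]
          field_simp
        have h3 : -α - 1 = -(((N : ℝ) + 1) / 2) := by rw [hα]; ring
        rw [h1, h2, h3]; ring

/-- The key estimate in the far field expansion: for `f ∈ L¹` supported in the closed ball of
radius `R` and `|x| ≥ 2R`, replacing `e^{i|x-y|}|x-y|^{-(N-1)/2}` by
`e^{i(|x| - x̂·y)}|x|^{-(N-1)/2}` produces an error of order `‖f‖₁ |x|^{-(N+1)/2}`. -/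
theorem far_field_kernel_replacement (N : ℕ) (hN : 2 ≤ N) (R : ℝ) (hR : 0 < R) :
    ∃ κ : ℝ, 0 < κ ∧
      ∀ f : EuclideanSpace ℝ (Fin N) → ℂ, Integrable f volume →
        Function.support f ⊆ Metric.closedBall (0 : EuclideanSpace ℝ (Fin N)) R →
        ∀ x : EuclideanSpace ℝ (Fin N), 2 * R ≤ ‖x‖ →
          ‖(∫ y in Metric.ball (0 : EuclideanSpace ℝ (Fin N)) R,
              (Complex.exp (Complex.I * (‖x - y‖ : ℝ)) *
                  ((‖x - y‖ ^ (-(((N : ℝ) - 1) / 2)) : ℝ) : ℂ) -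
                Complex.exp (Complex.I * ((‖x‖ - ⟪‖x‖⁻¹ • x, y⟫ : ℝ) : ℂ)) *
                  ((‖x‖ ^ (-(((N : ℝ) - 1) / 2)) : ℝ) : ℂ)) * f y)‖
            ≤ κ * (∫ y, ‖f y‖) * ‖x‖ ^ (-(((N : ℝ) + 1) / 2)) := by
  set κ₀ : ℝ := (((N : ℝ) - 1) / 2) * 2 ^ ((((N : ℝ) - 1) / 2) + 1) * R + R ^ 2 with hκ₀
  have hκ₀0 : 0 ≤ κ₀ := by
    have h2 : (2 : ℝ) ≤ (N : ℝ) := by exact_mod_cast hN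
    have : (0:ℝ) ≤ (((N : ℝ) - 1) / 2) := by linarith
    positivity
  refine ⟨κ₀ + 1, by positivity, ?_⟩
  intro f hf _ x hx
  have hc : (0:ℝ) < ‖x‖ := lt_of_lt_of_le (by linarith) hx
  have hpow : (0:ℝ) ≤ ‖x‖ ^ (-(((N : ℝ) + 1) / 2)) := Real.rpow_nonneg hc.le _
  set g : EuclideanSpace ℝ (Fin N) → ℂ := fun y =>
    (Complex.exp (Complex.I * (‖x - y‖ : ℝ)) *
        ((‖x - y‖ ^ (-(((N : ℝ) - 1) / 2)) : ℝ) : ℂ) -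
      Complex.exp (Complex.I * ((‖x‖ - ⟪‖x‖⁻¹ • x, y⟫ : ℝ) : ℂ)) *
        ((‖x‖ ^ (-(((N : ℝ) - 1) / 2)) : ℝ) : ℂ)) with hg
  have hInt : (0:ℝ) ≤ ∫ y, ‖f y‖ := integral_nonneg fun y => norm_nonneg _
  calc ‖∫ y in Metric.ball (0 : EuclideanSpace ℝ (Fin N)) R, g y * f y‖
      = ‖∫ y in Metric.ball (0 : EuclideanSpace ℝ (Fin N)) R, g y * f y‖ := rfl
    _ ≤ ∫ y in Metric.ball (0 : EuclideanSpace ℝ (Fin N)) R, ‖g y * f y‖ :=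
        norm_integral_le_integral_norm _
    _ ≤ ∫ y in Metric.ball (0 : EuclideanSpace ℝ (Fin N)) R,
          (κ₀ * ‖x‖ ^ (-(((N : ℝ) + 1) / 2))) * ‖f y‖ := by
        apply integral_mono_of_nonneg
        · exact Eventually.of_forall fun y => norm_nonneg _
        · exact (hf.norm.restrict).const_mul _
        · filter_upwards [ae_restrict_mem measurableSet_ball] with y hy
          have hyR : ‖y‖ ≤ R := by
            rw [mem_ball_zero_iff] at hy
            exact hy.le
          rw [norm_mul]
          apply mul_le_mul_of_nonneg_right _ (norm_nonneg _)
          exact pointwise_kernel_bound hN hR x y hx hyR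
    _ = (κ₀ * ‖x‖ ^ (-(((N : ℝ) + 1) / 2))) *
          ∫ y in Metric.ball (0 : EuclideanSpace ℝ (Fin N)) R, ‖f y‖ :=
        integral_const_mul _ _
    _ ≤ (κ₀ * ‖x‖ ^ (-(((N : ℝ) + 1) / 2))) * ∫ y, ‖f y‖ := by
        apply mul_le_mul_of_nonneg_left _ (by positivity)
        exact setIntegral_le_integral hf.norm
          (Eventually.of_forall fun y => norm_nonneg _)
    _ ≤ (κ₀ + 1) * (∫ y, ‖f y‖) * ‖x‖ ^ (-(((N : ℝ) + 1) / 2)) := by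
        nlinarith [mul_nonneg hInt hpow]
end

section
/- Let N ≥ 1, 1 < p < ∞, p' = p/(p-1), and let T : L^{p'}(ℝ^N; ℝ) → L^p(ℝ^N; ℝ) be a bounded linear operator. Let Q ∈ L^∞(ℝ^N) be nonnegative a.e. with ess sup_{|x|≥R} Q(x) → 0 as R → ∞. Suppose that for every bounded measurable set B ⊂ ℝ^N the operator v ↦ 1_B · Q^{1/p} · T(Q^{1/p} v) is compact from L^{p'}(ℝ^N) to L^p(ℝ^N). Then the operator v ↦ Q^{1/p} · T(Q^{1/p} v) is compact from L^{p'}(ℝ^N) to L^p(ℝ^N). -/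
set_option maxHeartbeats 1000000
set_option synthInstance.maxHeartbeats 400000

open MeasureTheory Filter Metric Complex
open scoped Real RealInnerProductSpace ENNReal Topology

section Aux

variable {α : Type*} [MeasurableSpace α] {μ : Measure α} {q : ℝ≥0∞} [Fact (1 ≤ q)]

/-- Multiplication by the indicator of a measurable set, as a linear map on `Lp`. -/
noncomputable def indLM (B : Set α) (hB : MeasurableSet B) :
    Lp ℝ q μ →ₗ[ℝ] Lp ℝ q μ where
  toFun f := ((Lp.memLp f).indicator hB).toLp (B.indicator f)
  map_add' f g := by
    classical
    apply Lp.ext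
    filter_upwards [MemLp.coeFn_toLp ((Lp.memLp (f + g)).indicator hB : MemLp (B.indicator (f + g)) q μ),
      MemLp.coeFn_toLp ((Lp.memLp f).indicator hB : MemLp (B.indicator f) q μ),
      MemLp.coeFn_toLp ((Lp.memLp g).indicator hB : MemLp (B.indicator g) q μ),
      Lp.coeFn_add f g,
      Lp.coeFn_add (((Lp.memLp f).indicator hB).toLp (B.indicator f))
        (((Lp.memLp g).indicator hB).toLp (B.indicator g))] with x h1 h2 h3 h4 h5
    rw [h1, h5, Pi.add_apply, h2, h3, Set.indicator_apply, Set.indicator_apply,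
      Set.indicator_apply]
    split_ifs with hx
    · rw [h4]; rfl
    · simp
  map_smul' c f := by
    classical
    apply Lp.ext
    filter_upwards [MemLp.coeFn_toLp ((Lp.memLp (c • f)).indicator hB : MemLp (B.indicator (c • f)) q μ),
      MemLp.coeFn_toLp ((Lp.memLp f).indicator hB : MemLp (B.indicator f) q μ),
      Lp.coeFn_smul c f,
      Lp.coeFn_smul c (((Lp.memLp f).indicator hB).toLp (B.indicator f))] with x h1 h2 h3 h4
    simp only [RingHom.id_apply]
    rw [h1, h4, Pi.smul_apply, h2, Set.indicator_apply, Set.indicator_apply]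
    split_ifs with hx
    · rw [h3]; rfl
    · simp

theorem coeFn_indLM (B : Set α) (hB : MeasurableSet B) (f : Lp ℝ q μ) :
    ⇑(indLM B hB f) =ᵐ[μ] B.indicator f :=
  MemLp.coeFn_toLp ((Lp.memLp f).indicator hB : MemLp (B.indicator f) q μ)

theorem norm_indLM_le (B : Set α) (hB : MeasurableSet B) (f : Lp ℝ q μ) :
    ‖indLM B hB f‖ ≤ ‖f‖ := by
  rw [show indLM B hB f = ((Lp.memLp f).indicator hB).toLp (B.indicator f) from rfl,
    Lp.norm_toLp (B.indicator ⇑f) ((Lp.memLp f).indicator hB), Lp.norm_def]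
  exact ENNReal.toReal_mono (Lp.eLpNorm_ne_top f) (eLpNorm_indicator_le _)

/-- Multiplication by the indicator of a measurable set, as a continuous linear map on `Lp`. -/
noncomputable def indCLM (B : Set α) (hB : MeasurableSet B) :
    Lp ℝ q μ →L[ℝ] Lp ℝ q μ :=
  (indLM B hB).mkContinuous 1 (fun f => by simpa using norm_indLM_le B hB f)

theorem coeFn_indCLM (B : Set α) (hB : MeasurableSet B) (f : Lp ℝ q μ) :
    ⇑(indCLM B hB f) =ᵐ[μ] B.indicator f :=
  coeFn_indLM B hB f

/-- Helper: a.e. bound by a multiple of an `Lp` function bounds the `Lp` seminorm. -/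
theorem toReal_eLpNorm_le_mul_norm {E : Type*} [NormedAddCommGroup E]
    {f : α → ℝ} {g : Lp E q μ} {c : ℝ} (hc : 0 ≤ c)
    (h : ∀ᵐ x ∂μ, ‖f x‖ ≤ c * ‖g x‖) :
    (eLpNorm f q μ).toReal ≤ c * ‖g‖ := by
  have hle := eLpNorm_le_mul_eLpNorm_of_ae_le_mul h q
  have hne : ENNReal.ofReal c * eLpNorm (⇑g) q μ ≠ ⊤ :=
    ENNReal.mul_ne_top ENNReal.ofReal_ne_top (Lp.eLpNorm_ne_top g)
  calc (eLpNorm f q μ).toReal ≤ (ENNReal.ofReal c * eLpNorm (⇑g) q μ).toReal :=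
        ENNReal.toReal_mono hne hle
    _ = c * ‖g‖ := by
        rw [ENNReal.toReal_mul, ENNReal.toReal_ofReal hc, Lp.norm_def]

end Aux

/-- Compactness of the Birman-Schwinger type operator `v ↦ Q^{1/p}·T(Q^{1/p}v)` when `Q ∈ L^∞`
is nonnegative with `ess sup_{|x|≥R} Q → 0` as `R → ∞`, assuming that all its truncations
`v ↦ 1_B·Q^{1/p}·T(Q^{1/p}v)` to bounded measurable sets `B` are compact. Operators are
characterized through almost-everywhere representatives. -/
theorem birman_schwinger_compact (N : ℕ) (hN : 1 ≤ N) (p p' : ℝ)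
    (hp : 1 < p) (hp' : p' = p / (p - 1))
    [Fact ((1 : ℝ≥0∞) ≤ ENNReal.ofReal p)] [Fact ((1 : ℝ≥0∞) ≤ ENNReal.ofReal p')]
    (T : Lp ℝ (ENNReal.ofReal p') (volume : Measure (EuclideanSpace ℝ (Fin N))) →L[ℝ]
      Lp ℝ (ENNReal.ofReal p) (volume : Measure (EuclideanSpace ℝ (Fin N))))
    (Q : EuclideanSpace ℝ (Fin N) → ℝ)
    (hQmem : MemLp Q ⊤ (volume : Measure (EuclideanSpace ℝ (Fin N))))
    (hQnonneg : ∀ᵐ x ∂(volume : Measure (EuclideanSpace ℝ (Fin N))), 0 ≤ Q x)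
    (hQdecay : ∀ ε : ℝ, 0 < ε → ∃ R : ℝ,
      ∀ᵐ x ∂(volume : Measure (EuclideanSpace ℝ (Fin N))), R ≤ ‖x‖ → Q x ≤ ε)
    (hloc : ∀ B : Set (EuclideanSpace ℝ (Fin N)), MeasurableSet B → Bornology.IsBounded B →
      ∀ S : Lp ℝ (ENNReal.ofReal p') (volume : Measure (EuclideanSpace ℝ (Fin N))) →L[ℝ]
        Lp ℝ (ENNReal.ofReal p) (volume : Measure (EuclideanSpace ℝ (Fin N))),
        (∀ v w : Lp ℝ (ENNReal.ofReal p')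
            (volume : Measure (EuclideanSpace ℝ (Fin N))),
          (⇑w =ᵐ[volume] fun x => Q x ^ (1 / p) * v x) →
          ⇑(S v) =ᵐ[volume] fun x =>
            B.indicator (fun _ => (1 : ℝ)) x * (Q x ^ (1 / p) * T w x)) →
        IsCompactOperator ⇑S) :
    ∀ S : Lp ℝ (ENNReal.ofReal p') (volume : Measure (EuclideanSpace ℝ (Fin N))) →L[ℝ]
      Lp ℝ (ENNReal.ofReal p) (volume : Measure (EuclideanSpace ℝ (Fin N))),
      (∀ v w : Lp ℝ (ENNReal.ofReal p')
          (volume : Measure (EuclideanSpace ℝ (Fin N))),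
        (⇑w =ᵐ[volume] fun x => Q x ^ (1 / p) * v x) →
        ⇑(S v) =ᵐ[volume] fun x => Q x ^ (1 / p) * T w x) →
      IsCompactOperator ⇑S := by
  intro S hS
  have μdef : True := trivial
  have hp0 : (0 : ℝ) < p := lt_trans one_pos hp
  have hip : (0 : ℝ) ≤ 1 / p := by positivity
  -- bound on Q
  set C : ℝ := (eLpNormEssSup Q volume).toReal with hCdef
  have hCnn : 0 ≤ C := ENNReal.toReal_nonneg
  have hQtop : eLpNormEssSup Q volume ≠ ⊤ := by
    have := hQmem.2
    rwa [eLpNorm_exponent_top, lt_top_iff_ne_top] at this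
  have hQbd : ∀ᵐ x ∂volume, ‖Q x‖ ≤ C := by
    filter_upwards [ae_le_eLpNormEssSup (f := Q) (μ := volume)] with x hx
    have h := ENNReal.toReal_mono hQtop hx
    simpa using h
  -- measurability of Q^{1/p}
  have hg : AEStronglyMeasurable (fun x => Q x ^ (1 / p)) volume :=
    (Real.continuous_rpow_const hip).comp_aestronglyMeasurable hQmem.1
  -- a.e. bound on Q^{1/p}
  have hgbd : ∀ᵐ x ∂volume, ‖Q x ^ (1 / p)‖ ≤ C ^ (1 / p) := by
    filter_upwards [hQbd, hQnonneg] with x h1 h2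
    rw [Real.norm_eq_abs, _root_.abs_of_nonneg (Real.rpow_nonneg h2 _)]
    exact Real.rpow_le_rpow h2 (le_trans (le_abs_self _) h1) hip
  -- membership of Q^{1/p} v
  have hWmem : ∀ v : Lp ℝ (ENNReal.ofReal p') volume,
      MemLp (fun x => Q x ^ (1 / p) * v x) (ENNReal.ofReal p') volume := by
    intro v
    refine MemLp.of_le_mul (c := C ^ (1 / p)) (Lp.memLp v) (hg.mul (Lp.aestronglyMeasurable v)) ?_
    filter_upwards [hgbd] with x hx
    rw [norm_mul]
    exact mul_le_mul_of_nonneg_right hx (norm_nonneg _)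
  set w : Lp ℝ (ENNReal.ofReal p') volume → Lp ℝ (ENNReal.ofReal p') volume :=
    fun v => (hWmem v).toLp _ with hwdef
  have hw : ∀ v, ⇑(w v) =ᵐ[volume] fun x => Q x ^ (1 / p) * v x := fun v => MemLp.coeFn_toLp _
  have hSv : ∀ v, ⇑(S v) =ᵐ[volume] fun x => Q x ^ (1 / p) * T (w v) x := fun v => hS v (w v) (hw v)
  have hwnorm : ∀ v, ‖w v‖ ≤ C ^ (1 / p) * ‖v‖ := by
    intro v
    rw [Lp.norm_def]
    have hcoe : eLpNorm (⇑(w v)) (ENNReal.ofReal p') volume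
        = eLpNorm (fun x => Q x ^ (1 / p) * v x) (ENNReal.ofReal p') volume :=
      eLpNorm_congr_ae (hw v)
    rw [hcoe]
    refine toReal_eLpNorm_le_mul_norm (Real.rpow_nonneg hCnn _) ?_
    filter_upwards [hgbd] with x hx
    rw [norm_mul]
    exact mul_le_mul_of_nonneg_right hx (norm_nonneg _)
  -- reduce to closure of compact operators
  suffices hmem : S ∈ closure {A : Lp ℝ (ENNReal.ofReal p') volume →L[ℝ] Lp ℝ (ENNReal.ofReal p) volume |
      IsCompactOperator ⇑A} by
    rwa [isClosed_setOf_isCompactOperator.closure_eq] at hmem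
  rw [Metric.mem_closure_iff]
  intro ε hε
  set M : ℝ := ‖T‖ * C ^ (1 / p) with hMdef
  have hMnn : 0 ≤ M := mul_nonneg (norm_nonneg _) (Real.rpow_nonneg hCnn _)
  set K : ℝ := M + 1 with hKdef
  have hK : 0 < K := by positivity
  set δ : ℝ := (ε / K) ^ p with hδdef
  have hεK : 0 < ε / K := div_pos hε hK
  have hδ : 0 < δ := Real.rpow_pos_of_pos hεK _
  have hδroot : δ ^ (1 / p) = ε / K := by
    rw [hδdef, ← Real.rpow_mul (le_of_lt hεK), mul_one_div_cancel (ne_of_gt hp0),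
      Real.rpow_one]
  obtain ⟨R, hR⟩ := hQdecay δ hδ
  set B : Set (EuclideanSpace ℝ (Fin N)) := Metric.closedBall 0 R with hBdef
  have hBmeas : MeasurableSet B := measurableSet_closedBall
  have hBbdd : Bornology.IsBounded B := Metric.isBounded_closedBall
  set SB := (indCLM (q := ENNReal.ofReal p) (μ := volume) B hBmeas).comp S with hSBdef
  have hSBv : ∀ u, SB u = indCLM (q := ENNReal.ofReal p) (μ := volume) B hBmeas (S u) :=
    fun u => rfl
  -- SB is compact by hloc
  have hSBcompact : IsCompactOperator ⇑SB := by
    refine hloc B hBmeas hBbdd SB ?_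
    intro v w' hw'
    have h1 : ⇑(S v) =ᵐ[volume] fun x => Q x ^ (1 / p) * T w' x := hS v w' hw'
    have h2 : ⇑(SB v) =ᵐ[volume] B.indicator (⇑(S v)) := by
      rw [hSBv v]; exact coeFn_indCLM B hBmeas (S v)
    classical
    filter_upwards [h1, h2] with x hx1 hx2
    rw [hx2, Set.indicator_apply, Set.indicator_apply]
    split_ifs with hxB
    · rw [hx1, one_mul]
    · rw [zero_mul]
  refine ⟨SB, hSBcompact, ?_⟩
  -- norm estimate
  have hdist : ‖S - SB‖ ≤ ε / K * M := by
    refine ContinuousLinearMap.opNorm_le_bound _ (by positivity) fun v => ?_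
    have h2' : ⇑(SB v) =ᵐ[volume] B.indicator (⇑(S v)) := by
      rw [hSBv v]; exact coeFn_indCLM B hBmeas (S v)
    have hnorm : ∀ᵐ x ∂volume, ‖(S v : _ → ℝ) x - SB v x‖ ≤ δ ^ (1 / p) * ‖T (w v) x‖ := by
      classical
      filter_upwards [hSv v, h2', hR, hQnonneg] with x h1 h2 h3 h4
      rw [h2, Set.indicator_apply]
      split_ifs with hxB
      · rw [sub_self, norm_zero]
        exact mul_nonneg (Real.rpow_nonneg (le_of_lt hδ) _) (norm_nonneg _)
      · rw [sub_zero, h1, norm_mul]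
        have hxR : R ≤ ‖x‖ := by
          have := Metric.mem_closedBall.not.mp hxB
          rw [dist_zero_right] at this
          linarith [not_le.mp this]
        have hQx : Q x ≤ δ := h3 hxR
        have : ‖Q x ^ (1 / p)‖ ≤ δ ^ (1 / p) := by
          rw [Real.norm_eq_abs, _root_.abs_of_nonneg (Real.rpow_nonneg h4 _)]
          exact Real.rpow_le_rpow h4 hQx hip
        exact mul_le_mul_of_nonneg_right this (norm_nonneg _)
    have key : ‖(S - SB) v‖ ≤ δ ^ (1 / p) * ‖T (w v)‖ := by
      rw [Lp.norm_def]
      have hcoe : eLpNorm (⇑((S - SB) v)) (ENNReal.ofReal p) volume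
          = eLpNorm (fun x => (S v : _ → ℝ) x - SB v x) (ENNReal.ofReal p) volume := by
        refine eLpNorm_congr_ae ?_
        have h1 : (S - SB) v = S v - SB v := rfl
        rw [h1]
        filter_upwards [Lp.coeFn_sub (S v) (SB v)] with x hx
        simpa using hx
      rw [hcoe]
      exact toReal_eLpNorm_le_mul_norm (Real.rpow_nonneg (le_of_lt hδ) _) hnorm
    have hTw : ‖T (w v)‖ ≤ ‖T‖ * (C ^ (1 / p) * ‖v‖) :=
      le_trans (T.le_opNorm _) (mul_le_mul_of_nonneg_left (hwnorm v) (norm_nonneg _))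
    calc ‖(S - SB) v‖ ≤ δ ^ (1 / p) * (‖T‖ * (C ^ (1 / p) * ‖v‖)) :=
          le_trans key (mul_le_mul_of_nonneg_left hTw (Real.rpow_nonneg (le_of_lt hδ) _))
      _ = ε / K * M * ‖v‖ := by rw [hδroot, hMdef]; ring
  have hlt : ε / K * M < ε := by
    rw [div_mul_eq_mul_div, div_lt_iff₀ hK]
    nlinarith
  rw [dist_eq_norm]
  exact lt_of_le_of_lt hdist hlt
end
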